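/- Let a ≥ 1 and let y : [0, x₀] → ℝ be a C¹ function satisfying y(t)² + y'(t)² ≤ a² for all t, with y(0) = 1. Then for all x ∈ [0, x₀] with x ≤ π/2, one has y(x) ≥ cos x − √(a² − 1) · sin x. -/

import Mathlib

open Real

/-- Comparison estimate for the differential inequality `y² + (y')² ≤ a²`
with `y(0) = 1` and `a ≥ 1`: for `0 ≤ x ≤ min(x₀, π/2)`,
`y(x) ≥ cos x − √(a² − 1) · sin x`. -/
theorem stmt3 (a x₀ : ℝ) (ha : 1 ≤ a) (hx₀ : 0 ≤ x₀)
    (y y' : ℝ → ℝ)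
    (hderiv : ∀ t ∈ Set.Icc (0 : ℝ) x₀, HasDerivAt y (y' t) t)
    (hcont : ContinuousOn y' (Set.Icc (0 : ℝ) x₀))
    (hineq : ∀ t ∈ Set.Icc (0 : ℝ) x₀, (y t) ^ 2 + (y' t) ^ 2 ≤ a ^ 2)
    (hy0 : y 0 = 1) :
    ∀ x ∈ Set.Icc (0 : ℝ) x₀, x ≤ π / 2 →
      Real.cos x - Real.sqrt (a ^ 2 - 1) * Real.sin x ≤ y x := by
  intro x hx hxpi
  obtain ⟨hx0, hxx₀⟩ := hx
  have ha0 : (0:ℝ) < a := lt_of_lt_of_le one_pos ha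
  -- bounds on y
  have hyb : ∀ t ∈ Set.Icc (0 : ℝ) x₀, -a ≤ y t ∧ y t ≤ a := by
    intro t ht
    have h := hineq t ht
    constructor
    · nlinarith [sq_nonneg (y t + a), sq_nonneg (y' t)]
    · nlinarith [sq_nonneg (y t - a), sq_nonneg (y' t)]
  -- key estimate for any c > a
  have key : ∀ c : ℝ, a < c →
      Real.cos x - Real.sqrt (c ^ 2 - 1) * Real.sin x ≤ y x := by
    intro c hc
    have hc1 : (1:ℝ) < c := lt_of_le_of_lt ha hc
    have hc0 : (0:ℝ) < c := lt_trans one_pos hc1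
    set A : ℝ → ℝ := fun t => Real.arccos (y t / c) with hA
    set A' : ℝ → ℝ := fun t =>
      -(1 / Real.sqrt (1 - (y t / c) ^ 2)) * (y' t / c) with hA'
    have hu : ∀ t ∈ Set.Icc (0 : ℝ) x₀, |y t / c| < 1 := by
      intro t ht
      obtain ⟨h1, h2⟩ := hyb t ht
      rw [abs_div, abs_of_pos hc0, div_lt_one hc0]
      rcases abs_cases (y t) with ⟨he, _⟩ | ⟨he, _⟩ <;> linarith
    have hAd : ∀ t ∈ Set.Icc (0 : ℝ) x₀, HasDerivAt A (A' t) t := by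
      intro t ht
      have h1 : y t / c ≠ -1 := by
        have := hu t ht; intro h; rw [h] at this; simp at this
      have h2 : y t / c ≠ 1 := by
        have := hu t ht; intro h; rw [h] at this; simp at this
      have := (Real.hasDerivAt_arccos h1 h2).comp t ((hderiv t ht).div_const c)
      exact this
    have hsq : ∀ t ∈ Set.Icc (0 : ℝ) x₀, ‖A' t‖ ≤ 1 := by
      intro t ht
      have hu' := hu t ht
      have hupos : 0 < 1 - (y t / c) ^ 2 := by
        have : (y t / c) ^ 2 < 1 := by
          have := abs_lt.mp hu'
          nlinarith [this.1, this.2]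
        linarith
      set s := Real.sqrt (1 - (y t / c) ^ 2) with hs
      have hspos : 0 < s := Real.sqrt_pos.mpr hupos
      have hs2 : s ^ 2 = 1 - (y t / c) ^ 2 := Real.sq_sqrt hupos.le
      -- |y' t| ≤ c * s
      have hy' : |y' t| ≤ c * s := by
        have hcs : (0:ℝ) ≤ c * s := mul_nonneg hc0.le hspos.le
        have h2 : (y' t) ^ 2 ≤ (c * s) ^ 2 := by
          have h := hineq t ht
          have : (c * s) ^ 2 = c ^ 2 - (y t) ^ 2 := by
            rw [mul_pow, hs2]; field_simp
          rw [this]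
          nlinarith [sq_nonneg (y t)]
        calc |y' t| = Real.sqrt ((y' t) ^ 2) := (Real.sqrt_sq_eq_abs _).symm
          _ ≤ Real.sqrt ((c * s) ^ 2) := Real.sqrt_le_sqrt h2
          _ = c * s := Real.sqrt_sq hcs
      have : ‖A' t‖ = |y' t| / (c * s) := by
        rw [hA']
        rw [Real.norm_eq_abs, abs_mul, abs_neg, abs_div, abs_div,
          abs_of_pos hc0, abs_of_pos hspos, abs_one]
        field_simp
      rw [this, div_le_one (mul_pos hc0 hspos)]
      exact hy'
    -- mean value inequality: A is 1-Lipschitz on the interval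
    have hmv : ‖A x - A 0‖ ≤ 1 * ‖x - 0‖ := by
      apply Convex.norm_image_sub_le_of_norm_hasDerivWithin_le
        (fun t ht => (hAd t ht).hasDerivWithinAt) hsq (convex_Icc 0 x₀)
        ⟨le_refl 0, hx₀⟩ ⟨hx0, hxx₀⟩
    have hAx : A x ≤ A 0 + x := by
      have := (abs_le.mp (by simpa [Real.norm_eq_abs, abs_of_nonneg hx0] using hmv)).2
      linarith
    have hA0 : A 0 = Real.arccos (1 / c) := by rw [hA]; simp [hy0]
    -- translate back via cos
    have hyx1 : -1 ≤ y x / c := by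
      have := (hu x ⟨hx0, hxx₀⟩); linarith [(abs_lt.mp this).1]
    have hyx2 : y x / c ≤ 1 := by
      have := (hu x ⟨hx0, hxx₀⟩); linarith [(abs_lt.mp this).2]
    have hcosA : Real.cos (A x) = y x / c := Real.cos_arccos hyx1 hyx2
    have harc1 : Real.arccos (1 / c) ≤ π / 2 :=
      (Real.arccos_le_pi_div_two).mpr (by positivity)
    have hAx0 : 0 ≤ A x := Real.arccos_nonneg _
    have hple : A 0 + x ≤ π := by rw [hA0]; linarith
    have hcos_le : Real.cos (A 0 + x) ≤ Real.cos (A x) :=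
      Real.cos_le_cos_of_nonneg_of_le_pi hAx0 hple hAx
    -- expand cos (arccos (1/c) + x)
    have h1c1 : -1 ≤ 1 / c := by
      have : (0:ℝ) < 1 / c := by positivity
      linarith
    have h1c2 : 1 / c ≤ 1 := by
      rw [div_le_one hc0]; linarith
    have hexp : Real.cos (A 0 + x)
        = (1 / c) * Real.cos x - Real.sqrt (1 - (1 / c) ^ 2) * Real.sin x := by
      rw [hA0, Real.cos_add, Real.cos_arccos h1c1 h1c2, Real.sin_arccos]
    have hsqrt : c * Real.sqrt (1 - (1 / c) ^ 2) = Real.sqrt (c ^ 2 - 1) := by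
      rw [show c ^ 2 - 1 = c ^ 2 * (1 - (1 / c) ^ 2) by field_simp,
        Real.sqrt_mul (sq_nonneg c), Real.sqrt_sq hc0.le]
    have : Real.cos x - Real.sqrt (c ^ 2 - 1) * Real.sin x ≤ c * Real.cos (A x) := by
      calc Real.cos x - Real.sqrt (c ^ 2 - 1) * Real.sin x
          = c * Real.cos (A 0 + x) := by
            rw [hexp, ← hsqrt]; field_simp
        _ ≤ c * Real.cos (A x) := by
            exact mul_le_mul_of_nonneg_left hcos_le hc0.le
    rw [hcosA] at this
    calc Real.cos x - Real.sqrt (c ^ 2 - 1) * Real.sin x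
        ≤ c * (y x / c) := this
      _ = y x := by field_simp
  -- let c → a⁺
  have hcontF : Filter.Tendsto (fun c : ℝ => Real.cos x - Real.sqrt (c ^ 2 - 1) * Real.sin x)
      (nhdsWithin a (Set.Ioi a)) (nhds (Real.cos x - Real.sqrt (a ^ 2 - 1) * Real.sin x)) := by
    apply Filter.Tendsto.mono_left _ nhdsWithin_le_nhds
    have : Continuous fun c : ℝ => Real.cos x - Real.sqrt (c ^ 2 - 1) * Real.sin x := by
      continuity
    exact this.tendsto a
  exact le_of_tendsto hcontF
    (Filter.eventually_of_mem self_mem_nhdsWithin fun c hc => key c hc)
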